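/- The function ψ is twice continuously differentiable on the interval [0,1]. -/

import Mathlib

/-- `a n = (4/n^4)·tanh(nπ/2) − π/n^3`. -/
noncomputable def a (n : ℕ) : ℝ :=
  4 / (n : ℝ) ^ 4 * Real.tanh ((n : ℝ) * Real.pi / 2) - Real.pi / (n : ℝ) ^ 3

/-- `ψ(z) = (24/π^4) · Σ_{n odd} a_n · sin(nπz)`, the sum over odd positive integers. -/
noncomputable def psi (z : ℝ) : ℝ :=
  (24 / Real.pi ^ 4) * ∑' k : ℕ, a (2 * k + 1) * Real.sin ((2 * (k : ℝ) + 1) * Real.pi * z)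


open Real Set

noncomputable def P (x : ℝ) : ℝ := (2*π)^3/12 * (x^3 - 3/2*x^2 + 1/2*x)

lemma hasSum_P {x : ℝ} (hx : x ∈ Icc (0:ℝ) 1) :
    HasSum (fun n : ℕ => 1/(n:ℝ)^3 * Real.sin (2*π*n*x)) (P x) := by
  have h := hasSum_one_div_nat_pow_mul_sin (k := 1) one_ne_zero hx
  have he : (Polynomial.map (algebraMap ℚ ℝ) (Polynomial.bernoulli 3)).eval x
      = x^3 - 3/2*x^2 + 1/2*x := by
    simp [Polynomial.bernoulli, Finset.sum_range_succ, bernoulli, bernoulli'_one, bernoulli'_two]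
    norm_num
    ring
  norm_num [he] at h
  convert h using 1
  · funext n; rw [one_div]
  · unfold P; ring

lemma abs_tanh_le (t : ℝ) : |Real.tanh t| ≤ 1 := by
  rw [Real.tanh_eq_sinh_div_cosh, abs_div, abs_of_pos (Real.cosh_pos t),
    div_le_one (Real.cosh_pos t), abs_le]
  constructor <;> nlinarith [Real.cosh_sq t, Real.cosh_pos t,
    sq_nonneg (Real.sinh t + Real.cosh t), sq_nonneg (Real.sinh t - Real.cosh t)]

lemma base_summable : Summable (fun k : ℕ => 1/((k:ℝ)+1)^2) := by
  have h := Real.summable_one_div_nat_pow.mpr (by norm_num : 1 < 2)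
  have h2 := (summable_nat_add_iff 1).mpr h
  simpa using h2

lemma norm_iter (cc dd x : ℝ) {n : ℕ} (hn : n ≤ 2) :
    ‖iteratedFDeriv ℝ n (fun z => cc * Real.sin (dd * z)) x‖ ≤ |cc| * |dd| ^ n := by
  have hd : ∀ y : ℝ, HasDerivAt (fun z => cc * Real.sin (dd * z))
      (cc * dd * Real.cos (dd * y)) y := by
    intro y
    have h1 : HasDerivAt (fun z : ℝ => dd * z) dd y := (hasDerivAt_id y).const_mul dd |>.congr_deriv (by ring)
    have h2 := (Real.hasDerivAt_sin (dd * y)).comp y h1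
    simpa [mul_comm, mul_assoc, mul_left_comm] using h2.const_mul cc
  have hderiv : deriv (fun z => cc * Real.sin (dd * z)) = fun y => cc * dd * Real.cos (dd * y) :=
    funext fun y => (hd y).deriv
  have hd2 : ∀ y : ℝ, HasDerivAt (fun z : ℝ => cc * dd * Real.cos (dd * z))
      (-(cc * dd * dd * Real.sin (dd * y))) y := by
    intro y
    have h1 : HasDerivAt (fun z : ℝ => dd * z) dd y := (hasDerivAt_id y).const_mul dd |>.congr_deriv (by ring)
    have h2 := (Real.hasDerivAt_cos (dd * y)).comp y h1
    have h3 := h2.const_mul (cc * dd)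
    exact h3.congr_deriv (by ring)
  rw [norm_iteratedFDeriv_eq_norm_iteratedDeriv, Real.norm_eq_abs]
  interval_cases n
  · rw [iteratedDeriv_zero, pow_zero, mul_one, abs_mul]
    exact (mul_le_mul_of_nonneg_left (Real.abs_sin_le_one _) (abs_nonneg _)).trans_eq (mul_one _)
  · rw [iteratedDeriv_one, (hd x).deriv, pow_one, abs_mul, abs_mul]
    exact (mul_le_mul_of_nonneg_left (Real.abs_cos_le_one _) (mul_nonneg (abs_nonneg _) (abs_nonneg _))).trans_eq (mul_one _)
  · rw [iteratedDeriv_succ, iteratedDeriv_one, hderiv, (hd2 x).deriv, abs_neg]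
    calc |cc * dd * dd * Real.sin (dd * x)| ≤ |cc * dd * dd| * 1 := by
          rw [abs_mul]; exact mul_le_mul_of_nonneg_left (Real.abs_sin_le_one _) (abs_nonneg _)
      _ = |cc| * |dd| ^ 2 := by rw [mul_one, abs_mul, abs_mul, sq]; ring

noncomputable def c (k : ℕ) : ℝ := 4 / (2*(k:ℝ)+1)^4 * Real.tanh ((2*(k:ℝ)+1) * π / 2)

lemma abs_c_le (k : ℕ) : |c k| ≤ 4 / (2*(k:ℝ)+1)^4 := by
  unfold c
  rw [abs_mul, abs_of_pos (by positivity : (0:ℝ) < 4 / (2*(k:ℝ)+1)^4)]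
  exact (mul_le_mul_of_nonneg_left (abs_tanh_le _) (by positivity)).trans_eq (mul_one _)

lemma g_contDiff : ContDiff ℝ 2 (fun z : ℝ => ∑' k : ℕ, c k * Real.sin ((2*(k:ℝ)+1) * π * z)) := by
  have hπ : (1:ℝ) ≤ π := by nlinarith [Real.pi_gt_three]
  apply contDiff_tsum (v := fun (_ : ℕ) (k : ℕ) => 4*π^2 / ((k:ℝ)+1)^2)
  · intro k
    exact contDiff_const.mul (Real.contDiff_sin.comp (contDiff_const.mul contDiff_id))
  · intro j _
    simpa [mul_one_div, div_eq_mul_inv] using base_summable.mul_left (4*π^2)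
  · intro j k x hj
    have hj' : j ≤ 2 := by exact_mod_cast hj
    have hk0 : (0:ℝ) ≤ (k:ℝ) := Nat.cast_nonneg k
    have hs : (1:ℝ) ≤ 2*(k:ℝ)+1 := by linarith
    refine (norm_iter (c k) ((2*(k:ℝ)+1) * π) x hj').trans ?_
    have h2 : |(2*(k:ℝ)+1) * π| ^ j ≤ ((2*(k:ℝ)+1) * π) ^ 2 := by
      rw [abs_of_pos (by positivity)]
      exact pow_le_pow_right₀ (by nlinarith) hj'
    calc |c k| * |(2*(k:ℝ)+1) * π| ^ j
        ≤ (4 / (2*(k:ℝ)+1)^4) * ((2*(k:ℝ)+1) * π) ^ 2 :=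
          mul_le_mul (abs_c_le k) h2 (pow_nonneg (abs_nonneg _) _) (by positivity)
      _ = 4*π^2 / (2*(k:ℝ)+1)^2 := by
          field_simp
      _ ≤ 4*π^2 / ((k:ℝ)+1)^2 := by
          gcongr
          linarith

lemma summable_of_bound {f : ℕ → ℝ} (C : ℝ) (h : ∀ k, |f k| ≤ C / ((k:ℝ)+1)^2) : Summable f := by
  refine Summable.of_abs (Summable.of_nonneg_of_le (fun k => abs_nonneg _) h ?_)
  simpa [mul_one_div, div_eq_mul_inv] using base_summable.mul_left C

lemma hsum_c (z : ℝ) : Summable (fun k : ℕ => c k * Real.sin ((2*(k:ℝ)+1) * π * z)) := by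
  apply summable_of_bound 4
  intro k
  have hk0 : (0:ℝ) ≤ (k:ℝ) := Nat.cast_nonneg k
  calc |c k * Real.sin ((2*(k:ℝ)+1) * π * z)| ≤ 4 / (2*(k:ℝ)+1)^4 * 1 := by
        rw [abs_mul]
        exact mul_le_mul (abs_c_le k) (Real.abs_sin_le_one _) (abs_nonneg _) (by positivity)
    _ ≤ 4 / ((k:ℝ)+1)^2 := by
        rw [mul_one, div_le_div_iff₀ (by positivity) (by positivity)]
        nlinarith [sq_nonneg (k:ℝ), pow_nonneg hk0 3, pow_nonneg hk0 4]

lemma odd_hasSum {z : ℝ} (hz : z ∈ Icc (0:ℝ) 1) :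
    HasSum (fun k : ℕ => 1/(2*(k:ℝ)+1)^3 * Real.sin ((2*(k:ℝ)+1) * π * z))
      (P (z/2) - P z / 8) := by
  set f : ℕ → ℝ := fun n => 1/(n:ℝ)^3 * Real.sin (2*π*n*(z/2)) with hf
  have hz2 : z/2 ∈ Icc (0:ℝ) 1 := ⟨by linarith [hz.1], by linarith [hz.2]⟩
  have htot : HasSum f (P (z/2)) := hasSum_P hz2
  have heven : HasSum (fun k : ℕ => f (2*k)) (1/8 * P z) := by
    have h8 := (hasSum_P hz).mul_left (1/8)
    have hfun : (fun k : ℕ => f (2*k))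
        = fun k : ℕ => 1/8 * (1/(k:ℝ)^3 * Real.sin (2*π*(k:ℝ)*z)) := by
      funext k
      simp only [hf]
      push_cast
      rw [show 2*π*(2*(k:ℝ))*(z/2) = 2*π*(k:ℝ)*z by ring]
      ring
    rw [hfun]
    exact h8
  have hfun2 : (fun k : ℕ => 1/(2*(k:ℝ)+1)^3 * Real.sin ((2*(k:ℝ)+1) * π * z))
      = fun k : ℕ => f (2*k+1) := by
    funext k
    simp only [hf]
    push_cast
    rw [show 2*π*(2*(k:ℝ)+1)*(z/2) = (2*(k:ℝ)+1)*π*z by ring]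
  have hodd_s : Summable (fun k : ℕ => f (2*k+1)) := by
    rw [← hfun2]
    apply summable_of_bound 1
    intro k
    have hk0 : (0:ℝ) ≤ (k:ℝ) := Nat.cast_nonneg k
    calc |1/(2*(k:ℝ)+1)^3 * Real.sin ((2*(k:ℝ)+1) * π * z)| ≤ 1/(2*(k:ℝ)+1)^3 * 1 := by
          rw [abs_mul, abs_of_pos (by positivity : (0:ℝ) < 1/(2*(k:ℝ)+1)^3)]
          exact mul_le_mul_of_nonneg_left (Real.abs_sin_le_one _) (by positivity)
      _ ≤ 1 / ((k:ℝ)+1)^2 := by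
          rw [mul_one, div_le_div_iff₀ (by positivity) (by positivity)]
          nlinarith [sq_nonneg (k:ℝ), pow_nonneg hk0 3]
  have hsplit : HasSum f (1/8 * P z + ∑' k, f (2*k+1)) := heven.even_add_odd hodd_s.hasSum
  have hval : P (z/2) = 1/8 * P z + ∑' k, f (2*k+1) := htot.unique hsplit
  have htsum : ∑' k, f (2*k+1) = P (z/2) - P z / 8 := by linarith
  rw [hfun2, ← htsum]
  exact hodd_s.hasSum

/-- `ψ` is twice continuously differentiable on `[0,1]`. -/
theorem psi_contDiffOn : ContDiffOn ℝ 2 psi (Set.Icc (0:ℝ) 1) := by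
  have hcd : ContDiff ℝ 2 (fun z : ℝ =>
      (24/π^4) * ((∑' k : ℕ, c k * Real.sin ((2*(k:ℝ)+1) * π * z))
        - π * (P (z/2) - P z / 8))) := by
    refine contDiff_const.mul (g_contDiff.sub (contDiff_const.mul (ContDiff.sub ?_ ?_)))
    · unfold P; fun_prop (disch := norm_num)
    · unfold P; fun_prop (disch := norm_num)
  refine hcd.contDiffOn.congr ?_
  intro z hz
  have h2 := odd_hasSum hz
  have hterm : ∀ k : ℕ, a (2*k+1) * Real.sin ((2*(k:ℝ)+1) * π * z)
      = c k * Real.sin ((2*(k:ℝ)+1) * π * z)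
        - π * (1/(2*(k:ℝ)+1)^3 * Real.sin ((2*(k:ℝ)+1) * π * z)) := by
    intro k
    unfold a c
    push_cast
    ring
  unfold psi
  rw [tsum_congr hterm, Summable.tsum_sub (hsum_c z) (h2.summable.mul_left π), tsum_mul_left,
    h2.tsum_eq]
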